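/- With g(I) = kI and β(M) = β₀/(1 + αM/I*), if R₀ = β₀/(μ+ν) > 1 then the endemic prevalence is explicitly I_e(α,k) = I_SIR · I* R₀ / (kαμ/(μ+ν) + I* R₀), where I_SIR = μ(1 − (μ+ν)/β₀)/(μ+ν); in particular this I_e solves μ(1 − (μ+ν)/β(kI_e)) − (μ+ν)I_e = 0, and 0 < I_e ≤ I_SIR with I_e strictly decreasing in α. -/
import Mathlib


/-- with `g(I) = kI`, `β(M) = β₀/(1 + αM/I*)` and `R₀ > 1`, the
explicit endemic prevalence `I_e(α) = I_SIR · I*R₀/(kαμ/(μ+ν) + I*R₀)` solves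
the equilibrium equation, lies in `(0, I_SIR]`, and is strictly decreasing in
`α`. -/
theorem explicit_endemic_prevalence
    (μ ν β₀ k Istar : ℝ)
    (hμ : 0 < μ) (hν : 0 < ν) (hβ₀ : 0 < β₀) (hk : 0 < k) (hIstar : 0 < Istar)
    (hR0 : 1 < β₀ / (μ + ν))
    (ISIR : ℝ) (hISIR : ISIR = μ * (1 - (μ + ν) / β₀) / (μ + ν))
    (Ie : ℝ → ℝ)
    (hIe : ∀ α, Ie α = ISIR * (Istar * (β₀ / (μ + ν))) /
        (k * α * μ / (μ + ν) + Istar * (β₀ / (μ + ν)))) :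
    (∀ α, 0 ≤ α →
      μ * (1 - (μ + ν) * (1 + α * k * Ie α / Istar) / β₀) - (μ + ν) * Ie α = 0 ∧
      0 < Ie α ∧ Ie α ≤ ISIR) ∧
    StrictAntiOn Ie (Set.Ici 0) := by
  have hs : 0 < μ + ν := by linarith
  have hβs : μ + ν < β₀ := (one_lt_div hs).mp hR0
  have hISIRpos : 0 < ISIR := by
    rw [hISIR]
    apply div_pos _ hs
    apply mul_pos hμ
    have : (μ + ν) / β₀ < 1 := (div_lt_one hβ₀).mpr hβs
    linarith
  have hC : 0 < Istar * (β₀ / (μ + ν)) := mul_pos hIstar (div_pos hβ₀ hs)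
  have hD : ∀ α : ℝ, 0 ≤ α → 0 < k * α * μ / (μ + ν) + Istar * (β₀ / (μ + ν)) := by
    intro α hα
    have : 0 ≤ k * α * μ / (μ + ν) := by positivity
    linarith
  constructor
  · intro α hα
    have hDα := hD α hα
    have hDα' : k * α * μ / (μ + ν) + Istar * (β₀ / (μ + ν)) ≠ 0 := ne_of_gt hDα
    refine ⟨?_, ?_, ?_⟩
    · rw [hIe α, hISIR]
      field_simp
      ring
    · rw [hIe α]
      exact div_pos (mul_pos hISIRpos hC) hDα
    · rw [hIe α]
      rw [div_le_iff₀ hDα]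
      have : 0 ≤ ISIR * (k * α * μ / (μ + ν)) := by positivity
      nlinarith
  · intro a ha b hb hab
    simp only [Set.mem_Ici] at ha hb
    rw [hIe a, hIe b]
    apply div_lt_div_of_pos_left (mul_pos hISIRpos hC) (hD a ha)
    have : k * a * μ / (μ + ν) < k * b * μ / (μ + ν) := by
      apply div_lt_div_of_pos_right _ hs
      nlinarith [mul_pos hk hμ]
    linarith
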